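/- 𝔪𝔠 = min(𝔯, 𝔡), where 𝔪𝔠 = 𝔪𝔠(P(ω)/fin), 𝔯 is the reaping number and 𝔡 is the dominating number. -/

import Mathlib

open scoped symmDiff

instance booleanRingQuotient {R : Type*} [BooleanRing R] (I : Ideal R) :
    BooleanRing (R ⧸ I) where
  isIdempotentElem a := by
    obtain ⟨x, rfl⟩ := Ideal.Quotient.mk_surjective a
    show _ * _ = _
    rw [← map_mul]; exact congrArg _ (BooleanRing.mul_self x)

/-- The ideal of finite sets, as a ring ideal of the Boolean ring `AsBoolRing (Set α)`. -/
def finSetIdeal (α : Type*) : Ideal (AsBoolRing (Set α)) where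
  carrier := {s | (ofBoolRing s).Finite}
  zero_mem' := by simp [ofBoolRing_zero]
  add_mem' := by
    intro a b ha hb
    have h : (ofBoolRing (a + b) : Set α) = ofBoolRing a ∆ ofBoolRing b := ofBoolRing_add a b
    show (ofBoolRing (a + b)).Finite
    rw [h]
    refine Set.Finite.subset (Set.Finite.union ha hb) ?_
    rintro x (h1 | h1)
    · exact Or.inl h1.1
    · exact Or.inr h1.1
  smul_mem' := by
    intro c x hx
    have h : (ofBoolRing (c * x) : Set α) = ofBoolRing c ⊓ ofBoolRing x := ofBoolRing_mul c x
    show (ofBoolRing (c • x)).Finite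
    rw [smul_eq_mul, h]
    exact Set.Finite.subset hx Set.inter_subset_right

/-- The Boolean algebra `P(α)/fin`. -/
abbrev PowFin (α : Type*) : Type _ := AsBoolAlg ((AsBoolRing (Set α)) ⧸ finSetIdeal α)

/-- The dominating number `𝔡`: the least cardinality of a family of functions that
eventually dominates every function `ℕ → ℕ`. -/
noncomputable def dNum : Cardinal :=
  sInf {κ | ∃ D : Set (ℕ → ℕ), Cardinal.mk D = κ ∧
    ∀ g : ℕ → ℕ, ∃ d ∈ D, ∀ᶠ n in Filter.atTop, g n < d n}

/-- Van Douwen's cardinal `𝔡₂`: the minimum of `|A| + |D|` over pairs with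
`A ⊆ [ω]^ω`, `D ⊆ ω^ω`, such that `D` dominates on `A`. -/
noncomputable def d2Num : Cardinal :=
  sInf {κ | ∃ (A : Set (Set ℕ)) (D : Set (ℕ → ℕ)), (∀ a ∈ A, a.Infinite) ∧
    Cardinal.mk A + Cardinal.mk D = κ ∧
    ∀ g : ℕ → ℕ, ∃ d ∈ D, ∃ a ∈ A, ∀ n ∈ a, g n < d n}

/-- The classical reaping number `𝔯`: the least size of a family of infinite subsets of
`ℕ` that no single `b ⊆ ω` splits (reaps). -/
noncomputable def rNum : Cardinal :=
  sInf {κ | ∃ R : Set (Set ℕ), (∀ x ∈ R, x.Infinite) ∧ Cardinal.mk R = κ ∧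
    ¬ ∃ b : Set ℕ, ∀ r ∈ R, (b ∩ r).Infinite ∧ (r \ b).Infinite}

/-- `A` is ℵ₀-ideal complete in `B`. -/
def IdealComplete {B : Type*} [BooleanAlgebra B] (A : Set B) : Prop :=
  ∀ S T : Set B, S ⊆ A → T ⊆ A → S.Countable → T.Countable →
    (∀ s ∈ S, ∀ t ∈ T, s ⊓ t = ⊥) →
    ∃ b : B,
      (∀ a ∈ A, (a ≤ b ↔ ∃ F : Finset B, ↑F ⊆ S ∧ a ≤ F.sup id)) ∧
      (∀ a ∈ A, (a ⊓ b = ⊥ ↔ ∃ F : Finset B, ↑F ⊆ T ∧ a ≤ F.sup id))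

/-- `𝔪𝔠(B)`: the least cardinality of a subset of `B` that is not ℵ₀-ideal complete. -/
noncomputable def mcB (B : Type*) [BooleanAlgebra B] : Cardinal :=
  sInf {κ | ∃ A : Set B, Cardinal.mk A = κ ∧ ¬ IdealComplete A}
noncomputable section

open Set


/-- canonical quotient map -/
noncomputable def mkF (s : Set ℕ) : PowFin ℕ :=
  toBoolAlg (Ideal.Quotient.mk (finSetIdeal ℕ) (toBoolRing s))

lemma mkF_surjective : Function.Surjective mkF := by
  intro x
  obtain ⟨y, hy⟩ := Ideal.Quotient.mk_surjective (ofBoolAlg x)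
  refine ⟨ofBoolRing y, ?_⟩
  simp only [mkF, toBoolRing_ofBoolRing, hy, toBoolAlg_ofBoolAlg]

lemma mem_finSetIdeal {x : AsBoolRing (Set ℕ)} :
    x ∈ finSetIdeal ℕ ↔ (ofBoolRing x : Set ℕ).Finite := Iff.rfl

lemma mkF_eq_iff {s t : Set ℕ} : mkF s = mkF t ↔ (s ∆ t).Finite := by
  rw [mkF, mkF, (toBoolAlg).apply_eq_iff_eq, Ideal.Quotient.mk_eq_mk_iff_sub_mem,
    mem_finSetIdeal]
  simp

lemma mkF_inf (s t : Set ℕ) : mkF s ⊓ mkF t = mkF (s ∩ t) := by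
  apply ofBoolAlg.injective
  rw [ofBoolAlg_inf]
  simp only [mkF, ofBoolAlg_toBoolAlg, ← map_mul]
  rfl

lemma mkF_sup (s t : Set ℕ) : mkF s ⊔ mkF t = mkF (s ∪ t) := by
  apply ofBoolAlg.injective
  rw [ofBoolAlg_sup]
  simp only [mkF, ofBoolAlg_toBoolAlg, ← map_mul, ← map_add]
  congr 1
  apply (ofBoolRing (α := Set ℕ)).injective
  simp only [ofBoolRing_add, ofBoolRing_mul, ofBoolRing_toBoolRing]
  rw [Set.symmDiff_def]
  ext x; simp [Set.symmDiff_def]; tauto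

lemma mkF_le_iff {s t : Set ℕ} : mkF s ≤ mkF t ↔ (s \ t).Finite := by
  rw [← inf_eq_left, mkF_inf, mkF_eq_iff]
  constructor
  · intro h
    refine h.subset ?_
    intro x hx
    simp only [Set.mem_symmDiff, Set.mem_inter_iff, Set.mem_diff] at *
    tauto
  · intro h
    refine h.subset ?_
    intro x hx
    simp only [Set.mem_symmDiff, Set.mem_inter_iff, Set.mem_diff] at *
    tauto

lemma mkF_bot : mkF ∅ = ⊥ := by
  apply ofBoolAlg.injective
  rw [ofBoolAlg_bot]
  simp only [mkF, ofBoolAlg_toBoolAlg]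
  rw [← map_zero (Ideal.Quotient.mk (finSetIdeal ℕ))]
  rfl

lemma mkF_eq_bot_iff {s : Set ℕ} : mkF s = ⊥ ↔ s.Finite := by
  rw [← mkF_bot, mkF_eq_iff]
  have : s ∆ (∅ : Set ℕ) = s := by ext x; simp [Set.mem_symmDiff]
  rw [this]
/-! ### Helper lemmas about `rNum` and `dNum` -/

lemma rSet_nonempty : {κ | ∃ R : Set (Set ℕ), (∀ x ∈ R, x.Infinite) ∧ Cardinal.mk R = κ ∧
    ¬ ∃ b : Set ℕ, ∀ r ∈ R, (b ∩ r).Infinite ∧ (r \ b).Infinite}.Nonempty := by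
  refine ⟨_, {s : Set ℕ | s.Infinite}, fun x hx => hx, rfl, ?_⟩
  rintro ⟨b, hb⟩
  by_cases h : (bᶜ : Set ℕ).Infinite
  · have := (hb bᶜ h).1
    simp at this
  · have hbinf : b.Infinite := by
      have := Set.infinite_univ (α := ℕ)
      rw [← Set.union_compl_self b] at this
      rcases Set.infinite_union.mp this with h' | h'
      · exact h'
      · exact absurd h' h
    have := (hb b hbinf).2
    simp at this

lemma dSet_nonempty : {κ | ∃ D : Set (ℕ → ℕ), Cardinal.mk D = κ ∧
    ∀ g : ℕ → ℕ, ∃ d ∈ D, ∀ᶠ n in Filter.atTop, g n < d n}.Nonempty :=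
  ⟨_, Set.univ, rfl, fun g => ⟨fun n => g n + 1, Set.mem_univ _,
    Filter.Eventually.of_forall fun n => Nat.lt_succ_self _⟩⟩

/-- splitting a countably-indexed family -/
lemma countable_splitting (f : ℕ → Set ℕ) (hf : ∀ n, (f n).Infinite) :
    ∃ b : Set ℕ, ∀ n, (b ∩ f n).Infinite ∧ (f n \ b).Infinite := by
  classical
  have next : ∀ (n prev : ℕ), ∃ x ∈ f (Nat.unpair n).1, prev < x :=
    fun n prev => (hf (Nat.unpair n).1).exists_gt prev
  let c : ℕ → ℕ := fun n => Nat.rec ((next 0 0).choose)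
    (fun m prev => (next (m + 1) prev).choose) n
  have hc_mem : ∀ n, c n ∈ f (Nat.unpair n).1 := by
    intro n
    cases n with
    | zero => exact (next 0 0).choose_spec.1
    | succ m => exact (next (m + 1) (c m)).choose_spec.1
  have hc_mono : StrictMono c := by
    apply strictMono_nat_of_lt_succ
    intro m
    exact (next (m + 1) (c m)).choose_spec.2
  refine ⟨{x | ∃ p, c p = x ∧ Even (Nat.unpair p).2}, fun i => ⟨?_, ?_⟩⟩
  · apply Set.infinite_of_forall_exists_gt
    intro k
    refine ⟨c (Nat.pair i (2 * (k + 1))), ⟨⟨_, rfl, ?_⟩, ?_⟩, ?_⟩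
    · rw [Nat.unpair_pair]; exact ⟨k + 1, two_mul _⟩
    · have := hc_mem (Nat.pair i (2 * (k + 1)))
      rwa [Nat.unpair_pair] at this
    · calc k < 2 * (k + 1) := by omega
        _ ≤ Nat.pair i (2 * (k + 1)) := Nat.right_le_pair _ _
        _ ≤ c (Nat.pair i (2 * (k + 1))) := hc_mono.le_apply
  · apply Set.infinite_of_forall_exists_gt
    intro k
    refine ⟨c (Nat.pair i (2 * (k + 1) + 1)), ⟨?_, ?_⟩, ?_⟩
    · have := hc_mem (Nat.pair i (2 * (k + 1) + 1))
      rwa [Nat.unpair_pair] at this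
    · rintro ⟨p, hp, hpe⟩
      have : p = Nat.pair i (2 * (k + 1) + 1) := hc_mono.injective hp
      rw [this, Nat.unpair_pair] at hpe
      simp [Nat.even_add_one, parity_simps] at hpe
    · calc k < 2 * (k + 1) + 1 := by omega
        _ ≤ Nat.pair i (2 * (k + 1) + 1) := Nat.right_le_pair _ _
        _ ≤ c (Nat.pair i (2 * (k + 1) + 1)) := hc_mono.le_apply

lemma aleph0_lt_rNum : Cardinal.aleph0 < rNum := by
  obtain ⟨R, hRinf, hcard, hnos⟩ := csInf_mem rSet_nonempty
  rw [rNum, ← hcard]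
  by_contra hcon
  have h : Cardinal.mk R ≤ Cardinal.aleph0 := not_lt.mp hcon
  have hRc : R.Countable := by
    rw [← Set.countable_coe_iff, ← Cardinal.mk_le_aleph0_iff]; exact h
  rcases R.eq_empty_or_nonempty with rfl | hne
  · exact hnos ⟨∅, by simp⟩
  · obtain ⟨f, hf⟩ := hRc.exists_eq_range hne
    have hfinf : ∀ n, (f n).Infinite := by
      intro n; exact hRinf _ (by rw [hf]; exact ⟨n, rfl⟩)
    obtain ⟨b, hb⟩ := countable_splitting f hfinf
    apply hnos
    refine ⟨b, ?_⟩
    intro r hr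
    rw [hf] at hr
    obtain ⟨n, rfl⟩ := hr
    exact hb n

lemma aleph0_lt_dNum : Cardinal.aleph0 < dNum := by
  obtain ⟨D, hcard, hdom⟩ := csInf_mem dSet_nonempty
  rw [dNum, ← hcard]
  by_contra hcon
  have h : Cardinal.mk D ≤ Cardinal.aleph0 := not_lt.mp hcon
  have hDc : D.Countable := by
    rw [← Set.countable_coe_iff, ← Cardinal.mk_le_aleph0_iff]; exact h
  have hne : D.Nonempty := by
    obtain ⟨d, hd, _⟩ := hdom 0
    exact ⟨d, hd⟩
  obtain ⟨f, hf⟩ := hDc.exists_eq_range hne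
  obtain ⟨d, hd, hev⟩ := hdom (fun n => (Finset.range (n + 1)).sup (fun i => f i n) + 1)
  rw [hf] at hd
  obtain ⟨i, rfl⟩ := hd
  obtain ⟨N, hN⟩ := Filter.eventually_atTop.mp hev
  have h1 := hN (max N i) (le_max_left _ _)
  have h2 : f i (max N i) ≤ (Finset.range ((max N i) + 1)).sup (fun j => f j (max N i)) :=
    Finset.le_sup (f := fun j => f j (max N i)) (Finset.mem_range.mpr (Nat.lt_succ_of_le (le_max_right N i)))
  omega

lemma exists_splitter {R : Set (Set ℕ)} (hinf : ∀ r ∈ R, r.Infinite)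
    (h : Cardinal.mk R < rNum) :
    ∃ b, ∀ r ∈ R, (b ∩ r).Infinite ∧ (r \ b).Infinite := by
  by_contra hno
  have : rNum ≤ Cardinal.mk R := by
    rw [rNum]; exact csInf_le' ⟨R, hinf, rfl, hno⟩
  exact absurd this (not_le.mpr h)

lemma exists_io_ge {fam : Set (ℕ → ℕ)} (h : Cardinal.mk fam < dNum) :
    ∃ g : ℕ → ℕ, StrictMono g ∧ ∀ f ∈ fam, ∀ k, ∃ n ≥ k, f n ≤ g n := by
  have hnd : ¬ ∀ g : ℕ → ℕ, ∃ d ∈ fam, ∀ᶠ n in Filter.atTop, g n < d n := by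
    intro hd
    have : dNum ≤ Cardinal.mk fam := by
      rw [dNum]; exact csInf_le' ⟨fam, rfl, hd⟩
    exact absurd this (not_le.mpr h)
  push_neg at hnd
  obtain ⟨g₀, hg₀⟩ := hnd
  refine ⟨fun n => (Finset.range (n + 1)).sup g₀ + n, ?_, ?_⟩
  · intro m n hmn
    have : (Finset.range (m + 1)).sup g₀ ≤ (Finset.range (n + 1)).sup g₀ :=
      Finset.sup_mono (by intro x hx; simp at hx ⊢; omega)
    dsimp only
    omega
  · intro f hf k
    have := hg₀ f hf
    obtain ⟨n, hn, hfn⟩ := Filter.frequently_atTop.mp this k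
    refine ⟨n, hn, ?_⟩
    have h2 : g₀ n ≤ (Finset.range (n + 1)).sup g₀ := Finset.le_sup (by simp)
    dsimp only
    omega
lemma mkF_mono {s t : Set ℕ} (h : s ⊆ t) : mkF s ≤ mkF t := by
  rw [mkF_le_iff]
  rw [Set.diff_eq_empty.mpr h]
  exact Set.finite_empty

lemma sup_eq_bot_of_subset_empty {F : Finset (PowFin ℕ)} (hF : ↑F ⊆ (∅ : Set (PowFin ℕ))) :
    F.sup id = ⊥ := by
  have : F = ∅ := Finset.eq_empty_of_forall_notMem fun x hx => (hF hx)
  rw [this, Finset.sup_empty]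

lemma not_idealComplete_of_unsplittable {R : Set (Set ℕ)}
    (hRinf : ∀ x ∈ R, x.Infinite)
    (hnos : ¬ ∃ b : Set ℕ, ∀ r ∈ R, (b ∩ r).Infinite ∧ (r \ b).Infinite) :
    ¬ IdealComplete (mkF '' R) := by
    intro hic
    obtain ⟨b, hb1, hb2⟩ := hic ∅ ∅ (Set.empty_subset _) (Set.empty_subset _)
      Set.countable_empty Set.countable_empty (by simp)
    obtain ⟨B, rfl⟩ := mkF_surjective b
    apply hnos
    refine ⟨B, fun r hr => ⟨?_, ?_⟩⟩
    · by_contra hfin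
      rw [Set.not_infinite] at hfin
      have hbot : mkF r ⊓ mkF B = ⊥ := by
        rw [mkF_inf, mkF_eq_bot_iff]
        rw [Set.inter_comm]
        exact hfin
      obtain ⟨F, hFT, hle⟩ := (hb2 (mkF r) ⟨r, hr, rfl⟩).mp hbot
      rw [sup_eq_bot_of_subset_empty hFT, le_bot_iff, mkF_eq_bot_iff] at hle
      exact hRinf r hr hle
    · by_contra hfin
      rw [Set.not_infinite] at hfin
      have hle' : mkF r ≤ mkF B := mkF_le_iff.mpr hfin
      obtain ⟨F, hFS, hle⟩ := (hb1 (mkF r) ⟨r, hr, rfl⟩).mp hle'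
      rw [sup_eq_bot_of_subset_empty hFS, le_bot_iff, mkF_eq_bot_iff] at hle
      exact hRinf r hr hle

lemma mcSet_nonempty :
    {κ | ∃ A : Set (PowFin ℕ), Cardinal.mk A = κ ∧ ¬ IdealComplete A}.Nonempty := by
  obtain ⟨κ, R, hRinf, hcard, hnos⟩ := rSet_nonempty
  exact ⟨_, mkF '' R, rfl, not_idealComplete_of_unsplittable hRinf hnos⟩

lemma mcB_le_rNum : mcB (PowFin ℕ) ≤ rNum := by
  obtain ⟨R, hRinf, hcard, hnos⟩ := csInf_mem rSet_nonempty
  have hnc : ¬ IdealComplete (mkF '' R) := not_idealComplete_of_unsplittable hRinf hnos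
  have h1 : mcB (PowFin ℕ) ≤ Cardinal.mk (mkF '' R) := by
    rw [mcB]; exact csInf_le' ⟨mkF '' R, rfl, hnc⟩
  calc mcB (PowFin ℕ) ≤ Cardinal.mk (mkF '' R) := h1
    _ ≤ Cardinal.mk R := Cardinal.mk_image_le
    _ = rNum := by rw [rNum, ← hcard]
lemma finset_subset_range_bound {α : Type*} (u : ℕ → α) :
    ∀ F : Finset α, ↑F ⊆ Set.range u → ∃ M, ∀ x ∈ F, ∃ n < M, x = u n := by
  classical
  intro F
  induction F using Finset.induction_on with
  | empty => intro _; exact ⟨0, by simp⟩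
  | @insert y F' hy ih =>
    intro hF
    have hF' : ↑F' ⊆ Set.range u := by
      intro x hx; exact hF (by simp [hx])
    obtain ⟨M, hM⟩ := ih hF'
    obtain ⟨n, hn⟩ := hF (Finset.mem_coe.mpr (Finset.mem_insert_self y F'))
    refine ⟨max M (n + 1), ?_⟩
    intro x hx
    rcases Finset.mem_insert.mp hx with rfl | hx'
    · exact ⟨n, by omega, hn.symm⟩
    · obtain ⟨m, hm, hm'⟩ := hM x hx'
      exact ⟨m, by omega, hm'⟩

lemma mcB_le_dNum : mcB (PowFin ℕ) ≤ dNum := by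
  classical
  obtain ⟨D, hcard, hdom⟩ := csInf_mem dSet_nonempty
  set e : ℕ → Set ℕ := fun n => {x | (Nat.unpair x).1 = n} with he
  set av : (ℕ → ℕ) → Set ℕ := fun f => {x | f (Nat.unpair x).1 ≤ (Nat.unpair x).2} with hav
  set S : Set (PowFin ℕ) := Set.range (fun n => mkF (e n)) with hS
  set A : Set (PowFin ℕ) := S ∪ (fun f => mkF (av f)) '' D with hA
  have hnc : ¬ IdealComplete A := by
    intro hic
    obtain ⟨b, hb1, hb2⟩ := hic S ∅ Set.subset_union_left (Set.empty_subset _)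
      (Set.countable_range _) Set.countable_empty (by simp)
    obtain ⟨B, rfl⟩ := mkF_surjective b
    have hcol : ∀ n, (e n \ B).Finite := by
      intro n
      rw [← mkF_le_iff]
      refine (hb1 (mkF (e n)) (Set.mem_union_left _ ⟨n, rfl⟩)).mpr
        ⟨{mkF (e n)}, ?_, by simp⟩
      intro x hx
      simp only [Finset.coe_singleton, Set.mem_singleton_iff] at hx
      exact hx ▸ ⟨n, rfl⟩
    have hgex : ∀ n, ∃ m, ∀ k, m ≤ k → Nat.pair n k ∈ B := by
      intro n
      have hKfin : ((fun k => Nat.pair n k) ⁻¹' (e n \ B)).Finite := by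
        apply (hcol n).preimage
        apply Function.Injective.injOn
        intro a b h
        have := congrArg (fun x => (Nat.unpair x).2) h
        simpa using this
      obtain ⟨m, hm⟩ := hKfin.bddAbove
      refine ⟨m + 1, fun k hk => ?_⟩
      by_contra hnB
      have hkmem : k ∈ (fun k => Nat.pair n k) ⁻¹' (e n \ B) := ⟨by simp [he], hnB⟩
      have := hm hkmem
      omega
    choose g hg using hgex
    obtain ⟨d, hd, hev⟩ := hdom g
    obtain ⟨N, hN⟩ := Filter.eventually_atTop.mp hev
    have hnotle : ¬ (mkF (av d) ≤ mkF B) := by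
      intro hle
      obtain ⟨F, hFS, hsup⟩ := (hb1 (mkF (av d))
        (Set.mem_union_right _ ⟨d, hd, rfl⟩)).mp hle
      obtain ⟨M, hM⟩ := finset_subset_range_bound (fun n => mkF (e n)) F hFS
      have hbig : mkF (av d) ≤ mkF {x | (Nat.unpair x).1 < M} := by
        refine le_trans hsup (Finset.sup_le ?_)
        intro x hx
        obtain ⟨n, hn, rfl⟩ := hM x hx
        show mkF (e n) ≤ _
        apply mkF_mono
        intro y hy
        simp only [he, Set.mem_setOf_eq] at hy ⊢
        omega
      rw [mkF_le_iff] at hbig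
      have : (av d \ {x | (Nat.unpair x).1 < M}).Infinite := by
        apply Set.infinite_of_forall_exists_gt
        intro k
        refine ⟨Nat.pair M (max (d M) (k + 1)), ⟨?_, ?_⟩, ?_⟩
        · show d (Nat.unpair (Nat.pair M (max (d M) (k+1)))).1 ≤ _
          rw [Nat.unpair_pair]
          exact le_max_left _ _
        · simp [Nat.unpair_pair]
        · calc k < k + 1 := Nat.lt_succ_self k
            _ ≤ max (d M) (k + 1) := le_max_right _ _
            _ ≤ Nat.pair M (max (d M) (k + 1)) := Nat.right_le_pair _ _
      exact this hbig
    rw [mkF_le_iff, ← Set.not_infinite, not_not] at hnotle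
    have hfin : (av d \ B).Finite := by
      apply Set.Finite.subset (Set.Finite.biUnion (Finset.range N).finite_toSet
        (fun n _ => ((Set.finite_Iio (g n)).image (fun k => Nat.pair n k))))
      intro x hx
      obtain ⟨hxa, hxB⟩ := hx
      set n := (Nat.unpair x).1 with hn
      set k := (Nat.unpair x).2 with hk
      have hxpair : Nat.pair n k = x := Nat.pair_unpair x
      have hdk : d n ≤ k := hxa
      have hnN : n < N := by
        by_contra hge
        have h1 : g n < d n := hN n (by omega)
        have : Nat.pair n k ∈ B := hg n k (by omega)
        rw [hxpair] at this
        exact hxB this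
      have hkg : k < g n := by
        by_contra hge
        have : Nat.pair n k ∈ B := hg n k (by omega)
        rw [hxpair] at this
        exact hxB this
      exact Set.mem_biUnion (by simp [hnN]) ⟨k, hkg, hxpair⟩
    exact hnotle hfin
  have h1 : mcB (PowFin ℕ) ≤ Cardinal.mk A := by
    rw [mcB]; exact csInf_le' ⟨A, rfl, hnc⟩
  have hDd : (Cardinal.mk D : Cardinal) = dNum := by rw [dNum, ← hcard]
  have h2 : Cardinal.mk A ≤ dNum := by
    calc Cardinal.mk A ≤ Cardinal.mk S + Cardinal.mk ((fun f => mkF (av f)) '' D) :=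
          Cardinal.mk_union_le _ _
      _ ≤ Cardinal.aleph0 + Cardinal.mk D := by
          apply add_le_add
          · exact le_trans Cardinal.mk_range_le (by simp)
          · exact Cardinal.mk_image_le
      _ = Cardinal.mk D := Cardinal.add_eq_right (by rw [hDd]; exact aleph0_lt_dNum.le) (by rw [hDd]; exact aleph0_lt_dNum.le)
      _ = dNum := hDd
  exact le_trans h1 h2
lemma mkF_biUnion (u : ℕ → Set ℕ) (m : ℕ) :
    mkF (⋃ k ∈ Finset.range m, u k) = (Finset.range m).sup (fun k => mkF (u k)) := by
  induction m with
  | zero => simpa using mkF_bot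
  | succ n ih =>
    rw [Finset.range_add_one, Finset.set_biUnion_insert, Finset.sup_insert, ← ih, ← mkF_sup]

lemma tower_exists {S : Set (PowFin ℕ)} (hS : S.Countable) :
    ∃ Sig : ℕ → Set ℕ, Monotone Sig ∧
      (∀ n, ∃ F : Finset (PowFin ℕ), ↑F ⊆ S ∧ mkF (Sig n) = F.sup id) ∧
      (∀ F : Finset (PowFin ℕ), ↑F ⊆ S → ∃ n, F.sup id ≤ mkF (Sig n)) := by
  classical
  rcases S.eq_empty_or_nonempty with rfl | hne
  · refine ⟨fun _ => ∅, monotone_const, fun n => ⟨∅, by simp, by simpa using mkF_bot⟩, ?_⟩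
    intro F hF
    have : F = ∅ := Finset.eq_empty_of_forall_notMem fun x hx => (hF hx)
    exact ⟨0, by simp [this]⟩
  · obtain ⟨f, hf⟩ := hS.exists_eq_range hne
    choose rep hrep using mkF_surjective
    refine ⟨fun n => ⋃ k ∈ Finset.range (n + 1), rep (f k), ?_, ?_, ?_⟩
    · intro m n hmn
      intro x hx
      simp only [Set.mem_iUnion, Finset.mem_range] at hx ⊢
      obtain ⟨k, hk, hxk⟩ := hx
      exact ⟨k, by omega, hxk⟩
    · intro n
      refine ⟨(Finset.range (n + 1)).image f, ?_, ?_⟩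
      · intro x hx
        simp only [Finset.coe_image, Set.mem_image] at hx
        obtain ⟨k, _, rfl⟩ := hx
        rw [hf]; exact ⟨k, rfl⟩
      · rw [mkF_biUnion, Finset.sup_image]
        apply Finset.sup_congr rfl
        intro k _
        simp [hrep]
    · intro F hF
      have hF' : ↑F ⊆ Set.range f := by rw [← hf]; exact hF
      obtain ⟨M, hM⟩ := finset_subset_range_bound f F hF'
      refine ⟨M, Finset.sup_le ?_⟩
      intro x hx
      obtain ⟨k, hk, rfl⟩ := hM x hx
      rw [mkF_biUnion]
      have : mkF (rep (f k)) ≤ (Finset.range (M + 1)).sup (fun j => mkF (rep (f j))) :=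
        Finset.le_sup (f := fun j => mkF (rep (f j))) (Finset.mem_range.mpr (by omega))
      rw [hrep] at this
      exact this

lemma sup_inf_sup_bot {F G : Finset (PowFin ℕ)} {S T : Set (PowFin ℕ)}
    (hF : ↑F ⊆ S) (hG : ↑G ⊆ T) (hdisj : ∀ s ∈ S, ∀ t ∈ T, s ⊓ t = ⊥) :
    F.sup id ⊓ G.sup id = ⊥ := by
  rw [← disjoint_iff]
  rw [Finset.disjoint_sup_left]
  intro i hi
  rw [Finset.disjoint_sup_right]
  intro j hj
  rw [disjoint_iff]
  exact hdisj _ (hF hi) _ (hG hj)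
lemma idealComplete_of_small {A : Set (PowFin ℕ)}
    (hrA : Cardinal.mk A < rNum) (hdA : Cardinal.mk A < dNum) : IdealComplete A := by
  classical
  intro S T hSA hTA hScnt hTcnt hdisj
  choose rep hrep using mkF_surjective
  obtain ⟨Sig, hSigM, hSig2, hSig3⟩ := tower_exists hScnt
  obtain ⟨Tau, hTauM, hTau2, hTau3⟩ := tower_exists hTcnt
  have hST : ∀ n m, (Sig n ∩ Tau m).Finite := by
    intro n m
    obtain ⟨F, hFS, hF2⟩ := hSig2 n
    obtain ⟨G, hGT, hG2⟩ := hTau2 m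
    have : mkF (Sig n ∩ Tau m) = ⊥ := by
      rw [← mkF_inf, hF2, hG2, sup_inf_sup_bot hFS hGT hdisj]
    exact mkF_eq_bot_iff.mp this
  set W : Set ℕ := ⋃ n, Sig n with hWdef
  set V : Set ℕ := ⋃ m, Tau m with hVdef
  have hrs_ex : ∀ x, x ∈ W → ∃ n, x ∈ Sig n := fun x hx => Set.mem_iUnion.mp hx
  have hrt_ex : ∀ x, x ∈ V → ∃ m, x ∈ Tau m := fun x hx => Set.mem_iUnion.mp hx
  set rs : ℕ → ℕ := fun x => if h : x ∈ W then Nat.find (hrs_ex x h) else 0 with hrsdef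
  set rt : ℕ → ℕ := fun x => if h : x ∈ V then Nat.find (hrt_ex x h) else 0 with hrtdef
  have hrs1 : ∀ x, ∀ h : x ∈ W, x ∈ Sig (rs x) := by
    intro x h
    rw [hrsdef]; dsimp only; rw [dif_pos h]; exact Nat.find_spec (hrs_ex x h)
  have hrs2 : ∀ x n, x ∈ Sig n → rs x ≤ n := by
    intro x n hx
    have hxW : x ∈ W := Set.mem_iUnion.mpr ⟨n, hx⟩
    rw [hrsdef]; dsimp only; rw [dif_pos hxW]; exact Nat.find_min' _ hx
  have hrs3 : ∀ x n, x ∈ W → rs x ≤ n → x ∈ Sig n := fun x n h hle => hSigM hle (hrs1 x h)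
  have hrt1 : ∀ x, ∀ h : x ∈ V, x ∈ Tau (rt x) := by
    intro x h
    rw [hrtdef]; dsimp only; rw [dif_pos h]; exact Nat.find_spec (hrt_ex x h)
  have hrt2 : ∀ x m, x ∈ Tau m → rt x ≤ m := by
    intro x m hx
    have hxV : x ∈ V := Set.mem_iUnion.mpr ⟨m, hx⟩
    rw [hrtdef]; dsimp only; rw [dif_pos hxV]; exact Nat.find_min' _ hx
  have hrt3 : ∀ x m, x ∈ V → rt x ≤ m → x ∈ Tau m := fun x m h hle => hTauM hle (hrt1 x h)
  -- seed functions for the dominating-number argument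
  set pick : Set ℕ → ℕ → ℕ := fun Q k => if h : ∃ x, x ∈ Q ∧ k < x then h.choose else 0
    with hpickdef
  have hpickspec : ∀ (Q : Set ℕ) (k : ℕ), (∃ x, x ∈ Q ∧ k < x) →
      pick Q k ∈ Q ∧ k < pick Q k := by
    intro Q k h
    rw [hpickdef]; dsimp only; rw [dif_pos h]; exact h.choose_spec
  set Q1 : PowFin ℕ → ℕ → Set ℕ :=
    fun a k => {x | x ∈ rep a ∧ x ∈ V ∧ x ∉ W ∧ k < rt x} with hQ1def
  set Q2 : PowFin ℕ → ℕ → Set ℕ :=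
    fun a k => {x | x ∈ rep a ∧ x ∈ W ∧ x ∉ V ∧ k < rs x} with hQ2def
  set Q3 : PowFin ℕ → ℕ → Set ℕ :=
    fun a k => {x | x ∈ rep a ∧ x ∈ W ∧ x ∈ V ∧ k < rs x} with hQ3def
  set Q4 : PowFin ℕ → ℕ → Set ℕ :=
    fun a k => {x | x ∈ rep a ∧ x ∈ W ∧ x ∈ V ∧ k < rt x} with hQ4def
  set Ffun : PowFin ℕ → ℕ → ℕ := fun a k =>
    max (max (pick (Q1 a k) k) (pick (Q2 a k) k))
      (max (rt (pick (Q3 a k) k)) (pick (Q4 a k) k)) with hFfundef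
  have hFb : ∀ a k, pick (Q1 a k) k ≤ Ffun a k ∧ pick (Q2 a k) k ≤ Ffun a k ∧
      rt (pick (Q3 a k) k) ≤ Ffun a k ∧ pick (Q4 a k) k ≤ Ffun a k := by
    intro a k
    rw [hFfundef]
    exact ⟨le_trans (le_max_left _ _) (le_max_left _ _),
      le_trans (le_max_right _ _) (le_max_left _ _),
      le_trans (le_max_left _ _) (le_max_right _ _),
      le_trans (le_max_right _ _) (le_max_right _ _)⟩
  have hfamcard : Cardinal.mk (Ffun '' A) < dNum := lt_of_le_of_lt Cardinal.mk_image_le hdA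
  obtain ⟨g, hgmono, hgio⟩ := exists_io_ge hfamcard
  have hinv_ex : ∀ x : ℕ, ∃ m, x ≤ g m := fun x => ⟨x, hgmono.le_apply⟩
  set invg : ℕ → ℕ := fun x => Nat.find (hinv_ex x) with hinvdef
  have hinv1 : ∀ x, x ≤ g (invg x) := by
    intro x; rw [hinvdef]; exact Nat.find_spec (hinv_ex x)
  have hinv2 : ∀ x m, x ≤ g m → invg x ≤ m := by
    intro x m h; rw [hinvdef]; exact Nat.find_min' _ h
  set ERV : Set ℕ := {x | x ∈ V ∧ x ∉ W ∧ invg x < rt x} with hERVdef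
  set ERW : Set ℕ := {x | x ∈ W ∧ x ∉ V ∧ invg x < rs x} with hERWdef
  set EP : Set ℕ := {x | x ∈ W ∧ x ∈ V ∧ invg x < rt x} with hEPdef
  set wza : PowFin ℕ → Set ℕ :=
    fun a => {x | x ∈ rep a ∧ x ∈ W ∧ x ∈ V ∧ rt x ≤ g (rs x)} with hwzadef
  -- the splitting family
  set Rfam : Set (Set ℕ) := {r | r.Infinite ∧ ∃ a ∈ A,
    (r = rep a ∩ {x | x ∉ W ∧ x ∉ V} ∨ r = rep a ∩ ERV ∨ r = rep a ∩ ERW ∨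
      r = rep a ∩ EP ∨ r = wza a ∩ EP)} with hRfamdef
  have hRcard : Cardinal.mk Rfam < rNum := by
    have hsub : Rfam ⊆ (fun a => rep a ∩ {x | x ∉ W ∧ x ∉ V}) '' A ∪
        ((fun a => rep a ∩ ERV) '' A ∪ ((fun a => rep a ∩ ERW) '' A ∪
        ((fun a => rep a ∩ EP) '' A ∪ (fun a => wza a ∩ EP) '' A))) := by
      rintro r ⟨-, a, haA, h | h | h | h | h⟩
      · exact Or.inl ⟨a, haA, h.symm⟩
      · exact Or.inr (Or.inl ⟨a, haA, h.symm⟩)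
      · exact Or.inr (Or.inr (Or.inl ⟨a, haA, h.symm⟩))
      · exact Or.inr (Or.inr (Or.inr (Or.inl ⟨a, haA, h.symm⟩)))
      · exact Or.inr (Or.inr (Or.inr (Or.inr ⟨a, haA, h.symm⟩)))
    have hle : Cardinal.mk Rfam ≤ Cardinal.mk A + (Cardinal.mk A +
        (Cardinal.mk A + (Cardinal.mk A + Cardinal.mk A))) := by
      refine le_trans (Cardinal.mk_le_mk_of_subset hsub) ?_
      refine le_trans (Cardinal.mk_union_le _ _) (add_le_add Cardinal.mk_image_le ?_)
      refine le_trans (Cardinal.mk_union_le _ _) (add_le_add Cardinal.mk_image_le ?_)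
      refine le_trans (Cardinal.mk_union_le _ _) (add_le_add Cardinal.mk_image_le ?_)
      exact le_trans (Cardinal.mk_union_le _ _)
        (add_le_add Cardinal.mk_image_le Cardinal.mk_image_le)
    rcases le_or_gt (Cardinal.mk A) Cardinal.aleph0 with hA0 | hA0
    · refine lt_of_le_of_lt (le_trans hle ?_) aleph0_lt_rNum
      calc Cardinal.mk A + (Cardinal.mk A + (Cardinal.mk A +
            (Cardinal.mk A + Cardinal.mk A)))
          ≤ Cardinal.aleph0 + (Cardinal.aleph0 + (Cardinal.aleph0 +
            (Cardinal.aleph0 + Cardinal.aleph0))) := by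
            exact add_le_add hA0 (add_le_add hA0 (add_le_add hA0 (add_le_add hA0 hA0)))
        _ = Cardinal.aleph0 := by
            rw [Cardinal.aleph0_add_aleph0, Cardinal.aleph0_add_aleph0,
              Cardinal.aleph0_add_aleph0, Cardinal.aleph0_add_aleph0]
    · have h5 : Cardinal.mk A + (Cardinal.mk A + (Cardinal.mk A +
          (Cardinal.mk A + Cardinal.mk A))) = Cardinal.mk A := by
        rw [Cardinal.add_eq_self hA0.le, Cardinal.add_eq_self hA0.le,
          Cardinal.add_eq_self hA0.le, Cardinal.add_eq_self hA0.le]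
      exact lt_of_le_of_lt (le_trans hle (le_of_eq h5)) hrA
  obtain ⟨b₀, hb₀⟩ := exists_splitter (fun r hr => hr.1) hRcard
  -- the set B
  set B : Set ℕ := {x | (x ∉ W ∧ x ∉ V ∧ x ∈ b₀) ∨
    (x ∈ W ∧ x ∉ V ∧ ¬(invg x < rs x ∧ x ∈ b₀)) ∨
    (x ∉ W ∧ x ∈ V ∧ invg x < rt x ∧ x ∈ b₀) ∨
    (x ∈ W ∧ x ∈ V ∧ (g (rs x) < rt x ∨ (invg x < rt x ∧ x ∈ b₀)))} with hBdef
  have hbound : ∀ c : ℕ, ({x : ℕ | x ≤ g c}).Finite :=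
    fun c => (Set.finite_Iic (g c)).subset (fun x hx => hx)
  -- towers vs B
  have hF1 : ∀ n, (Sig n \ B).Finite := by
    intro n
    apply Set.Finite.subset ((hbound n).union (hST n (g n)))
    rintro x ⟨hxS, hxB⟩
    have hxW : x ∈ W := Set.mem_iUnion.mpr ⟨n, hxS⟩
    have hrsn : rs x ≤ n := hrs2 x n hxS
    rw [hBdef, Set.mem_setOf_eq] at hxB
    by_cases hxV : x ∈ V
    · have hle : rt x ≤ g (rs x) := by
        by_contra hlt
        exact hxB (Or.inr (Or.inr (Or.inr ⟨hxW, hxV, Or.inl (not_le.mp hlt)⟩)))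
      right
      exact ⟨hxS, hrt3 x (g n) hxV (le_trans hle (hgmono.monotone hrsn))⟩
    · have h2 : invg x < rs x ∧ x ∈ b₀ := by
        by_contra h
        exact hxB (Or.inr (Or.inl ⟨hxW, hxV, h⟩))
      left
      show x ≤ g n
      calc x ≤ g (invg x) := hinv1 x
        _ ≤ g n := hgmono.monotone (by omega)
  have hF2 : ∀ m, (B ∩ Tau m).Finite := by
    intro m
    apply Set.Finite.subset ((hbound m).union (hST m m))
    rintro x ⟨hxB, hxT⟩
    have hxV : x ∈ V := Set.mem_iUnion.mpr ⟨m, hxT⟩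
    have hrtm : rt x ≤ m := hrt2 x m hxT
    rw [hBdef, Set.mem_setOf_eq] at hxB
    rcases hxB with ⟨-, h, -⟩ | ⟨-, h, -⟩ | ⟨-, -, hlt, -⟩ | ⟨hxW, -, hcase⟩
    · exact absurd hxV h
    · exact absurd hxV h
    · left
      show x ≤ g m
      calc x ≤ g (invg x) := hinv1 x
        _ ≤ g m := hgmono.monotone (by omega)
    · rcases hcase with hgl | ⟨hlt, -⟩
      · right
        refine ⟨hrs3 x m hxW ?_, hxT⟩
        have : rs x ≤ g (rs x) := hgmono.le_apply
        omega
      · left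
        show x ≤ g m
        calc x ≤ g (invg x) := hinv1 x
          _ ≤ g m := hgmono.monotone (by omega)
  -- generic infinitude lemmas from the dominating function
  have hERVinf : ∀ a ∈ A, (∀ m, ∃ x, x ∈ Q1 a m ∧ m < x) → (rep a ∩ ERV).Infinite := by
    intro a haA hdg
    apply Set.infinite_of_forall_exists_gt
    intro K
    obtain ⟨n, hnK, hle⟩ := hgio (Ffun a) ⟨a, haA, rfl⟩ K
    obtain ⟨⟨hxa, hxV, hxW, hxrt⟩, hxgt⟩ := hpickspec (Q1 a n) n (hdg n)
    have hxg : pick (Q1 a n) n ≤ g n := le_trans (hFb a n).1 hle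
    exact ⟨pick (Q1 a n) n, ⟨hxa, hxV, hxW, lt_of_le_of_lt (hinv2 _ n hxg) hxrt⟩,
      lt_of_le_of_lt hnK hxgt⟩
  have hERWinf : ∀ a ∈ A, (∀ m, ∃ x, x ∈ Q2 a m ∧ m < x) → (rep a ∩ ERW).Infinite := by
    intro a haA hdg
    apply Set.infinite_of_forall_exists_gt
    intro K
    obtain ⟨n, hnK, hle⟩ := hgio (Ffun a) ⟨a, haA, rfl⟩ K
    obtain ⟨⟨hxa, hxW, hxV, hxrs⟩, hxgt⟩ := hpickspec (Q2 a n) n (hdg n)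
    have hxg : pick (Q2 a n) n ≤ g n := le_trans (hFb a n).2.1 hle
    exact ⟨pick (Q2 a n) n, ⟨hxa, hxW, hxV, lt_of_le_of_lt (hinv2 _ n hxg) hxrs⟩,
      lt_of_le_of_lt hnK hxgt⟩
  have hEPinf : ∀ a ∈ A, (∀ m, ∃ x, x ∈ Q4 a m ∧ m < x) → (rep a ∩ EP).Infinite := by
    intro a haA hdg
    apply Set.infinite_of_forall_exists_gt
    intro K
    obtain ⟨n, hnK, hle⟩ := hgio (Ffun a) ⟨a, haA, rfl⟩ K
    obtain ⟨⟨hxa, hxW, hxV, hxrt⟩, hxgt⟩ := hpickspec (Q4 a n) n (hdg n)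
    have hxg : pick (Q4 a n) n ≤ g n := le_trans (hFb a n).2.2.2 hle
    exact ⟨pick (Q4 a n) n, ⟨hxa, hxW, hxV, lt_of_le_of_lt (hinv2 _ n hxg) hxrt⟩,
      lt_of_le_of_lt hnK hxgt⟩
  have hwinf : ∀ a ∈ A, (∀ m, ∃ x, x ∈ Q3 a m ∧ m < x) → (wza a).Infinite := by
    intro a haA hdg
    apply Set.infinite_of_forall_exists_gt
    intro K
    obtain ⟨n, hnK, hle⟩ := hgio (Ffun a) ⟨a, haA, rfl⟩ K
    obtain ⟨⟨hxa, hxW, hxV, hxrs⟩, hxgt⟩ := hpickspec (Q3 a n) n (hdg n)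
    have hxg : rt (pick (Q3 a n) n) ≤ g n := le_trans (hFb a n).2.2.1 hle
    refine ⟨pick (Q3 a n) n, ⟨hxa, hxW, hxV, ?_⟩, lt_of_le_of_lt hnK hxgt⟩
    exact le_trans hxg (hgmono.monotone (le_of_lt hxrs))
  refine ⟨mkF B, ?_, ?_⟩
  · -- the S-side equivalence
    intro a haA
    constructor
    · intro hab
      apply Classical.byContradiction
      intro hnF
      apply False.elim
      have hdiag : ∀ n, (rep a \ Sig n).Infinite := by
        intro n
        by_contra hfin
        rw [Set.not_infinite] at hfin
        obtain ⟨F, hFS, hF2'⟩ := hSig2 n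
        refine hnF ⟨F, hFS, ?_⟩
        rw [← hF2', ← hrep a]
        exact mkF_le_iff.mpr hfin
      have hmain : (rep a \ B).Infinite := by
        by_cases hTf : ∃ m, (rep a ∩ Tau m).Infinite
        · obtain ⟨m, hm⟩ := hTf
          refine ((hm.diff (hF2 m)).mono ?_)
          rintro x ⟨⟨hxa, hxT⟩, hxB⟩
          exact ⟨hxa, fun hB => hxB ⟨hB, hxT⟩⟩
        · push_neg at hTf
          have hTfin : ∀ m, (rep a ∩ Tau m).Finite := fun m => hTf m
          by_cases hfree : (rep a ∩ {x | x ∉ W ∧ x ∉ V}).Infinite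
          · have hmem : (rep a ∩ {x | x ∉ W ∧ x ∉ V}) ∈ Rfam :=
              ⟨hfree, a, haA, Or.inl rfl⟩
            refine ((hb₀ _ hmem).2.mono ?_)
            rintro x ⟨⟨hxa, hxW, hxV⟩, hxb⟩
            refine ⟨hxa, fun hxB => ?_⟩
            rw [hBdef, Set.mem_setOf_eq] at hxB
            rcases hxB with ⟨-, -, h⟩ | ⟨h, -⟩ | ⟨-, h, -⟩ | ⟨h, -⟩
            · exact hxb h
            · exact hxW h
            · exact hxV h
            · exact hxW h
          · by_cases hRV : (rep a ∩ {x | x ∈ V ∧ x ∉ W}).Infinite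
            · have hdg : ∀ m, ∃ x, x ∈ Q1 a m ∧ m < x := by
                intro m
                obtain ⟨x, ⟨⟨hxa, hxV, hxW⟩, hxn⟩, hgt⟩ :=
                  (hRV.diff (hTfin m)).exists_gt m
                refine ⟨x, ⟨hxa, hxV, hxW, ?_⟩, hgt⟩
                by_contra hle
                exact hxn ⟨hxa, hrt3 x m hxV (not_lt.mp hle)⟩
              have hEinf := hERVinf a haA hdg
              have hmem : (rep a ∩ ERV) ∈ Rfam := ⟨hEinf, a, haA, Or.inr (Or.inl rfl)⟩
              refine ((hb₀ _ hmem).2.mono ?_)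
              rintro x ⟨⟨hxa, hxV, hxW, hxlt⟩, hxb⟩
              refine ⟨hxa, fun hxB => ?_⟩
              rw [hBdef, Set.mem_setOf_eq] at hxB
              rcases hxB with ⟨-, h, -⟩ | ⟨h, -⟩ | ⟨-, -, -, h⟩ | ⟨h, -⟩
              · exact h hxV
              · exact hxW h
              · exact hxb h
              · exact hxW h
            · by_cases hRW : ∀ n, (Q2 a n).Infinite
              · have hdg : ∀ m, ∃ x, x ∈ Q2 a m ∧ m < x := by
                  intro m
                  obtain ⟨x, hx, hgt⟩ := (hRW m).exists_gt m
                  exact ⟨x, hx, hgt⟩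
                have hEinf := hERWinf a haA hdg
                have hmem : (rep a ∩ ERW) ∈ Rfam :=
                  ⟨hEinf, a, haA, Or.inr (Or.inr (Or.inl rfl))⟩
                refine ((hb₀ _ hmem).1.mono ?_)
                rintro x ⟨hxb, hxa, hxW, hxV, hxlt⟩
                refine ⟨hxa, fun hxB => ?_⟩
                rw [hBdef, Set.mem_setOf_eq] at hxB
                rcases hxB with ⟨h, -⟩ | ⟨-, -, h⟩ | ⟨h, -⟩ | ⟨-, h, -⟩
                · exact h hxW
                · exact h ⟨hxlt, hxb⟩
                · exact h hxW
                · exact hxV h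
              · by_cases hP : ∀ n, (Q3 a n).Infinite
                · have hdg : ∀ m, ∃ x, x ∈ Q3 a m ∧ m < x := by
                    intro m
                    obtain ⟨x, hx, hgt⟩ := (hP m).exists_gt m
                    exact ⟨x, hx, hgt⟩
                  have hwin := hwinf a haA hdg
                  by_cases hwE : (wza a ∩ EP).Infinite
                  · have hmem : (wza a ∩ EP) ∈ Rfam :=
                      ⟨hwE, a, haA, Or.inr (Or.inr (Or.inr (Or.inr rfl)))⟩
                    refine ((hb₀ _ hmem).2.mono ?_)
                    rintro x ⟨⟨⟨hxa, hxW, hxV, hxle⟩, hxEP⟩, hxb⟩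
                    refine ⟨hxa, fun hxB => ?_⟩
                    rw [hBdef, Set.mem_setOf_eq] at hxB
                    rcases hxB with ⟨h, -⟩ | ⟨-, h, -⟩ | ⟨h, -⟩ | ⟨-, -, h⟩
                    · exact h hxW
                    · exact h hxV
                    · exact h hxW
                    · rcases h with h | ⟨-, h⟩
                      · omega
                      · exact hxb h
                  · have hrest : (wza a \ (wza a ∩ EP)).Infinite :=
                      hwin.diff (Set.not_infinite.mp hwE)
                    refine (hrest.mono ?_)
                    rintro x ⟨⟨hxa, hxW, hxV, hxle⟩, hxnE⟩
                    refine ⟨hxa, fun hxB => ?_⟩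
                    rw [hBdef, Set.mem_setOf_eq] at hxB
                    rcases hxB with ⟨h, -⟩ | ⟨-, h, -⟩ | ⟨h, -⟩ | ⟨-, -, h⟩
                    · exact h hxW
                    · exact h hxV
                    · exact h hxW
                    · rcases h with h | ⟨hlt, -⟩
                      · omega
                      · exact hxnE ⟨⟨hxa, hxW, hxV, hxle⟩, hxW, hxV, hlt⟩
                · exfalso
                  push_neg at hRW hP
                  obtain ⟨n₁, h₁⟩ := hRW
                  obtain ⟨n₂, h₂⟩ := hP
                  have hfree' : (rep a ∩ {x | x ∉ W ∧ x ∉ V}).Finite :=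
                    Set.not_infinite.mp hfree
                  have hRV' : (rep a ∩ {x | x ∈ V ∧ x ∉ W}).Finite :=
                    Set.not_infinite.mp hRV
                  have h₁' : (Q2 a n₁).Finite := h₁
                  have h₂' : (Q3 a n₂).Finite := h₂
                  apply hdiag (max n₁ n₂)
                  apply Set.Finite.subset (((hfree'.union hRV').union h₁').union h₂')
                  rintro x ⟨hxa, hxS⟩
                  by_cases hxW : x ∈ W
                  · have hrsgt : max n₁ n₂ < rs x := by
                      by_contra hle
                      exact hxS (hrs3 x (max n₁ n₂) hxW (not_lt.mp hle))
                    by_cases hxV : x ∈ V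
                    · exact Or.inr ⟨hxa, hxW, hxV, by omega⟩
                    · exact Or.inl (Or.inr ⟨hxa, hxW, hxV, by omega⟩)
                  · by_cases hxV : x ∈ V
                    · exact Or.inl (Or.inl (Or.inr ⟨hxa, hxV, hxW⟩))
                    · exact Or.inl (Or.inl (Or.inl ⟨hxa, hxW, hxV⟩))
      rw [← hrep a, mkF_le_iff] at hab
      exact hmain hab
    · rintro ⟨F, hFS, hle⟩
      obtain ⟨n, hn⟩ := hSig3 F hFS
      calc a ≤ F.sup id := hle
        _ ≤ mkF (Sig n) := hn
        _ ≤ mkF B := mkF_le_iff.mpr (hF1 n)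
  · -- the T-side equivalence
    intro a haA
    constructor
    · intro hab
      apply Classical.byContradiction
      intro hnF
      apply False.elim
      have hdiagT : ∀ m, (rep a \ Tau m).Infinite := by
        intro m
        by_contra hfin
        rw [Set.not_infinite] at hfin
        obtain ⟨F, hFT, hF2'⟩ := hTau2 m
        refine hnF ⟨F, hFT, ?_⟩
        rw [← hF2', ← hrep a]
        exact mkF_le_iff.mpr hfin
      have hmain : (rep a ∩ B).Infinite := by
        by_cases hSf : ∃ n, (rep a ∩ Sig n).Infinite
        · obtain ⟨n, hn⟩ := hSf
          refine ((hn.diff (hF1 n)).mono ?_)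
          rintro x ⟨⟨hxa, hxS⟩, hxB⟩
          refine ⟨hxa, ?_⟩
          by_contra hB
          exact hxB ⟨hxS, hB⟩
        · push_neg at hSf
          have hSfin : ∀ n, (rep a ∩ Sig n).Finite := fun n => hSf n
          by_cases hfree : (rep a ∩ {x | x ∉ W ∧ x ∉ V}).Infinite
          · have hmem : (rep a ∩ {x | x ∉ W ∧ x ∉ V}) ∈ Rfam :=
              ⟨hfree, a, haA, Or.inl rfl⟩
            refine ((hb₀ _ hmem).1.mono ?_)
            rintro x ⟨hxb, hxa, hxW, hxV⟩
            refine ⟨hxa, ?_⟩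
            rw [hBdef, Set.mem_setOf_eq]
            exact Or.inl ⟨hxW, hxV, hxb⟩
          · by_cases hRW : (rep a ∩ {x | x ∈ W ∧ x ∉ V}).Infinite
            · have hdg : ∀ m, ∃ x, x ∈ Q2 a m ∧ m < x := by
                intro m
                obtain ⟨x, ⟨⟨hxa, hxW, hxV⟩, hxn⟩, hgt⟩ :=
                  (hRW.diff (hSfin m)).exists_gt m
                refine ⟨x, ⟨hxa, hxW, hxV, ?_⟩, hgt⟩
                by_contra hle
                exact hxn ⟨hxa, hrs3 x m hxW (not_lt.mp hle)⟩
              have hEinf := hERWinf a haA hdg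
              have hmem : (rep a ∩ ERW) ∈ Rfam :=
                ⟨hEinf, a, haA, Or.inr (Or.inr (Or.inl rfl))⟩
              refine ((hb₀ _ hmem).2.mono ?_)
              rintro x ⟨⟨hxa, hxW, hxV, hxlt⟩, hxb⟩
              refine ⟨hxa, ?_⟩
              rw [hBdef, Set.mem_setOf_eq]
              exact Or.inr (Or.inl ⟨hxW, hxV, fun h => hxb h.2⟩)
            · by_cases hRVd : ∀ m, (Q1 a m).Infinite
              · have hdg : ∀ m, ∃ x, x ∈ Q1 a m ∧ m < x := by
                  intro m
                  obtain ⟨x, hx, hgt⟩ := (hRVd m).exists_gt m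
                  exact ⟨x, hx, hgt⟩
                have hEinf := hERVinf a haA hdg
                have hmem : (rep a ∩ ERV) ∈ Rfam := ⟨hEinf, a, haA, Or.inr (Or.inl rfl)⟩
                refine ((hb₀ _ hmem).1.mono ?_)
                rintro x ⟨hxb, hxa, hxV, hxW, hxlt⟩
                refine ⟨hxa, ?_⟩
                rw [hBdef, Set.mem_setOf_eq]
                exact Or.inr (Or.inr (Or.inl ⟨hxW, hxV, hxlt, hxb⟩))
              · by_cases hPd : ∀ m, (Q4 a m).Infinite
                · have hdg : ∀ m, ∃ x, x ∈ Q4 a m ∧ m < x := by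
                    intro m
                    obtain ⟨x, hx, hgt⟩ := (hPd m).exists_gt m
                    exact ⟨x, hx, hgt⟩
                  have hEinf := hEPinf a haA hdg
                  have hmem : (rep a ∩ EP) ∈ Rfam :=
                    ⟨hEinf, a, haA, Or.inr (Or.inr (Or.inr (Or.inl rfl)))⟩
                  refine ((hb₀ _ hmem).1.mono ?_)
                  rintro x ⟨hxb, hxa, hxW, hxV, hxlt⟩
                  refine ⟨hxa, ?_⟩
                  rw [hBdef, Set.mem_setOf_eq]
                  exact Or.inr (Or.inr (Or.inr ⟨hxW, hxV, Or.inr ⟨hxlt, hxb⟩⟩))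
                · exfalso
                  push_neg at hRVd hPd
                  obtain ⟨m₁, h₁⟩ := hRVd
                  obtain ⟨m₂, h₂⟩ := hPd
                  have hfree' : (rep a ∩ {x | x ∉ W ∧ x ∉ V}).Finite :=
                    Set.not_infinite.mp hfree
                  have hRW' : (rep a ∩ {x | x ∈ W ∧ x ∉ V}).Finite :=
                    Set.not_infinite.mp hRW
                  have h₁' : (Q1 a m₁).Finite := h₁
                  have h₂' : (Q4 a m₂).Finite := h₂
                  apply hdiagT (max m₁ m₂)
                  apply Set.Finite.subset (((hfree'.union hRW').union h₁').union h₂')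
                  rintro x ⟨hxa, hxT⟩
                  by_cases hxV : x ∈ V
                  · have hrtgt : max m₁ m₂ < rt x := by
                      by_contra hle
                      exact hxT (hrt3 x (max m₁ m₂) hxV (not_lt.mp hle))
                    by_cases hxW : x ∈ W
                    · exact Or.inr ⟨hxa, hxW, hxV, by omega⟩
                    · exact Or.inl (Or.inr ⟨hxa, hxV, hxW, by omega⟩)
                  · by_cases hxW : x ∈ W
                    · exact Or.inl (Or.inl (Or.inr ⟨hxa, hxW, hxV⟩))
                    · exact Or.inl (Or.inl (Or.inl ⟨hxa, hxW, hxV⟩))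
      rw [← hrep a, mkF_inf] at hab
      exact hmain (mkF_eq_bot_iff.mp hab)
    · rintro ⟨F, hFT, hle⟩
      obtain ⟨m, hm⟩ := hTau3 F hFT
      have hbot : mkF (Tau m) ⊓ mkF B = ⊥ := by
        rw [mkF_inf, mkF_eq_bot_iff]
        exact (hF2 m).subset (fun x hx => ⟨hx.2, hx.1⟩)
      have : a ⊓ mkF B ≤ mkF (Tau m) ⊓ mkF B :=
        inf_le_inf_right _ (le_trans hle hm)
      rw [hbot] at this
      exact le_bot_iff.mp this
/-- `𝔪𝔠 = min(𝔯, 𝔡)`, where `𝔪𝔠 = 𝔪𝔠(P(ω)/fin)`, `𝔯` is the reaping number and `𝔡` the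
dominating number. -/
theorem mc_eq_min_r_d : mcB (PowFin ℕ) = min rNum dNum := by
  apply le_antisymm
  · exact le_min mcB_le_rNum mcB_le_dNum
  · rw [mcB]
    apply le_csInf mcSet_nonempty
    rintro κ ⟨A, rfl, hnc⟩
    by_contra hlt
    have hlt' := not_le.mp hlt
    exact hnc (idealComplete_of_small (lt_of_lt_of_le hlt' (min_le_left _ _))
      (lt_of_lt_of_le hlt' (min_le_right _ _)))

end
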